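/- Let (x(·), p(·)) : I → ℝ⁴ × ℝ⁴ be a differentiable solution of the MTTP state and adjoint equations on an open interval I, for some continuous control u : I → [−1,1]. Assume that on all of I one has p4 = 0, p3 = 0, p1 sin x3 − p2 cos x3 = 0, x4(p1 cos x3 + p2 sin x3) + c p1 x2 sin x3 − 3 c p2 x1 sin x3 − 2 c p1 x1 cos x3 = 0, and p1(t) cos x3(t) + p2(t) sin x3(t) ≠ 0 for all t ∈ I. Then for all t ∈ I the control is given by the singular control formula u(t) = (c/(2b))·((−c x2² + 2 x1 x4 − 3 c x1² + g0) sin 2x3 + 2 c x1 x2 cos 2x3 + 4 a cos x3 − 4 x2 x4 cos² x3), where all state variables are evaluated at time t. -/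

import Mathlib

theorem stmt10
(a b c g0 : ℝ) (ha : 0 < a) (hb : 0 < b) (hc : 0 ≤ c) (hg0 : 0 < g0)
    (α β : ℝ)
    (x1 x2 x3 x4 p1 p2 p3 p4 u : ℝ → ℝ)
    (hu_meas : Measurable u)
    (hu : ∀ t ∈ Set.Ioo α β, u t ∈ Set.Icc (-1 : ℝ) 1)
    (hx1 : ∀ t ∈ Set.Ioo α β,
      HasDerivAt x1 (a * Real.cos (x3 t) - c * x1 t * x2 t) t)
    (hx2 : ∀ t ∈ Set.Ioo α β,
      HasDerivAt x2 (a * Real.sin (x3 t) + c * (x1 t) ^ 2 - g0) t)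
    (hx3 : ∀ t ∈ Set.Ioo α β, HasDerivAt x3 (x4 t - c * x1 t) t)
    (hx4 : ∀ t ∈ Set.Ioo α β, HasDerivAt x4 (b * u t) t)
    (hp1 : ∀ t ∈ Set.Ioo α β,
      HasDerivAt p1 (c * (p1 t * x2 t - 2 * p2 t * x1 t + p3 t)) t)
    (hp2 : ∀ t ∈ Set.Ioo α β, HasDerivAt p2 (c * p1 t * x1 t) t)
    (hp3 : ∀ t ∈ Set.Ioo α β,
      HasDerivAt p3 (a * (p1 t * Real.sin (x3 t) - p2 t * Real.cos (x3 t))) t)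
    (hp4 : ∀ t ∈ Set.Ioo α β, HasDerivAt p4 (-(p3 t)) t)
    (hu_cont : ContinuousOn u (Set.Ioo α β))
    (h4zero : ∀ t ∈ Set.Ioo α β, p4 t = 0)
    (h3zero : ∀ t ∈ Set.Ioo α β, p3 t = 0)
    (hsing : ∀ t ∈ Set.Ioo α β,
      p1 t * Real.sin (x3 t) - p2 t * Real.cos (x3 t) = 0)
    (hsing3 : ∀ t ∈ Set.Ioo α β,
      x4 t * (p1 t * Real.cos (x3 t) + p2 t * Real.sin (x3 t))
        + c * p1 t * x2 t * Real.sin (x3 t)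
        - 3 * c * p2 t * x1 t * Real.sin (x3 t)
        - 2 * c * p1 t * x1 t * Real.cos (x3 t) = 0)
    (hne : ∀ t ∈ Set.Ioo α β,
      p1 t * Real.cos (x3 t) + p2 t * Real.sin (x3 t) ≠ 0) :
    ∀ t ∈ Set.Ioo α β,
      u t = (c / (2 * b)) *
        ((-(c) * (x2 t) ^ 2 + 2 * x1 t * x4 t - 3 * c * (x1 t) ^ 2 + g0)
            * Real.sin (2 * x3 t)
          + 2 * c * x1 t * x2 t * Real.cos (2 * x3 t)
          + 4 * a * Real.cos (x3 t)
          - 4 * x2 t * x4 t * (Real.cos (x3 t)) ^ 2) := by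
  intro t ht
  have hts := hx3 t ht
  have hcos : HasDerivAt (fun τ => Real.cos (x3 τ))
      (-Real.sin (x3 t) * (x4 t - c * x1 t)) t :=
    (Real.hasDerivAt_cos (x3 t)).comp t hts
  have hsin : HasDerivAt (fun τ => Real.sin (x3 τ))
      (Real.cos (x3 t) * (x4 t - c * x1 t)) t :=
    (Real.hasDerivAt_sin (x3 t)).comp t hts
  have hcomb := ((((hx4 t ht).mul (((hp1 t ht).mul hcos).add
      ((hp2 t ht).mul hsin))).add
      ((((hp1 t ht).const_mul c).mul (hx2 t ht)).mul hsin)).sub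
      ((((hp2 t ht).const_mul (3 * c)).mul (hx1 t ht)).mul hsin)).sub
      ((((hp1 t ht).const_mul (2 * c)).mul (hx1 t ht)).mul hcos)
  have hev : (fun τ => x4 τ * (p1 τ * Real.cos (x3 τ) + p2 τ * Real.sin (x3 τ))
      + c * p1 τ * x2 τ * Real.sin (x3 τ)
      - 3 * c * p2 τ * x1 τ * Real.sin (x3 τ)
      - 2 * c * p1 τ * x1 τ * Real.cos (x3 τ)) =ᶠ[nhds t] (fun _ => (0 : ℝ)) := by
    filter_upwards [Ioo_mem_nhds ht.1 ht.2] with τ hτ using hsing3 τ hτ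
  have hΦ0 : HasDerivAt (fun τ => x4 τ * (p1 τ * Real.cos (x3 τ) + p2 τ * Real.sin (x3 τ))
      + c * p1 τ * x2 τ * Real.sin (x3 τ)
      - 3 * c * p2 τ * x1 τ * Real.sin (x3 τ)
      - 2 * c * p1 τ * x1 τ * Real.cos (x3 τ)) 0 t :=
    (hasDerivAt_const t (0 : ℝ)).congr_of_eventuallyEq hev
  have hD0 := hcomb.unique hΦ0
  simp only [Pi.mul_apply, Pi.add_apply] at hD0
  have hpy := Real.sin_sq_add_cos_sq (x3 t)
  have hG1 := hsing t ht
  have hp3z := h3zero t ht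
  have key : (b * u t) * (p1 t * Real.cos (x3 t) + p2 t * Real.sin (x3 t)) =
      (c / 2 * ((-c * (x2 t) ^ 2 + 2 * x1 t * x4 t - 3 * c * (x1 t) ^ 2 + g0)
          * (2 * Real.sin (x3 t) * Real.cos (x3 t))
        + 2 * c * x1 t * x2 t * (2 * (Real.cos (x3 t)) ^ 2 - 1)
        + 4 * a * Real.cos (x3 t)
        - 4 * x2 t * x4 t * (Real.cos (x3 t)) ^ 2)) *
      (p1 t * Real.cos (x3 t) + p2 t * Real.sin (x3 t)) := by
    linear_combination hD0
      - (x4 t * c * Real.cos (x3 t) + c * c * x2 t * Real.sin (x3 t)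
          - 2 * c * c * x1 t * Real.cos (x3 t)) * hp3z
      - (-(x4 t) ^ 2 + 4 * c * x1 t * x4 t
          + 2 * c * (Real.cos (x3 t)) ^ 2 * x1 t * x4 t
          + 2 * c * Real.sin (x3 t) * Real.cos (x3 t) * x2 t * x4 t
          - c * g0 + c * g0 * (Real.cos (x3 t)) ^ 2
          + c ^ 2 * (x2 t) ^ 2 - 4 * c ^ 2 * (x1 t) ^ 2
          - c ^ 2 * (Real.cos (x3 t)) ^ 2 * (x2 t) ^ 2
          - 3 * c ^ 2 * (Real.cos (x3 t)) ^ 2 * (x1 t) ^ 2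
          - 2 * c ^ 2 * Real.sin (x3 t) * Real.cos (x3 t) * x1 t * x2 t
          + a * c * Real.sin (x3 t)) * hG1
      - (2 * c * p2 t * Real.cos (x3 t) * x1 t * x4 t
          - 2 * c * p1 t * Real.cos (x3 t) * x2 t * x4 t
          + c * g0 * p2 t * Real.cos (x3 t)
          - c ^ 2 * p2 t * Real.cos (x3 t) * (x2 t) ^ 2
          - 3 * c ^ 2 * p2 t * Real.cos (x3 t) * (x1 t) ^ 2
          + 2 * c ^ 2 * p1 t * Real.cos (x3 t) * x1 t * x2 t) * hpy
  have hcancel := mul_right_cancel₀ (hne t ht) key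
  rw [Real.sin_two_mul, Real.cos_two_mul]
  have hb' : b ≠ 0 := ne_of_gt hb
  field_simp
  linear_combination 2 * hcancel
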